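/- arXiv:2012.05643 — 3 statements merged into one kernel-verified Lean document; each statement's English description precedes it below -/
import Mathlib

section
/- For a matrix P ∈ ℝ^{p×m}, there exists a matrix K ∈ ℝ^{m×p} such that the spectral radius of I − PK is strictly less than 1 if and only if P has full row rank p. -/
open Matrix

/-- Spectral radius of a real square matrix: the spectral radius (in `ℝ≥0∞`) of its
complexification, i.e. the supremum of the moduli of its complex eigenvalues. -/
noncomputable def specRad {n : Type*} [Fintype n] [DecidableEq n]
    (M : Matrix n n ℝ) : ENNReal :=
  spectralRadius ℂ (M.map Complex.ofReal)

/-- There exists `K` with `ρ(I − PK) < 1` iff `P` has full row rank `p`. -/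
theorem stmt0 (p m : ℕ) (P : Matrix (Fin p) (Fin m) ℝ) :
    (∃ K : Matrix (Fin m) (Fin p) ℝ, specRad (1 - P * K) < 1) ↔ P.rank = p := by
  constructor
  · rintro ⟨K, hK⟩
    have hmap : (1 - P * K).map Complex.ofReal
        = 1 - (P * K).map Complex.ofReal := by
      ext i j
      by_cases h : i = j <;> simp [Matrix.map_apply, Matrix.one_apply, h]
    have hunitC : IsUnit ((P * K).map Complex.ofReal) := by
      by_contra hcon
      have hmem : (1 : ℂ) ∈ spectrum ℂ ((1 - P * K).map Complex.ofReal) := by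
        rw [spectrum.mem_iff]
        intro hu
        apply hcon
        have : (algebraMap ℂ (Matrix (Fin p) (Fin p) ℂ)) 1 - (1 - P * K).map Complex.ofReal
            = (P * K).map Complex.ofReal := by
          rw [hmap, _root_.map_one, sub_sub_cancel]
        rwa [this] at hu
      have hle : (1 : ENNReal) ≤ specRad (1 - P * K) := by
        have := le_iSup₂ (f := fun k (_ : k ∈ spectrum ℂ ((1 - P * K).map Complex.ofReal)) =>
          (‖k‖₊ : ENNReal)) (1 : ℂ) hmem
        simpa [specRad, spectralRadius] using this
      exact absurd hK (not_lt.2 hle)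
    have hdetC : IsUnit ((P * K).map Complex.ofReal).det := by
      rwa [Matrix.isUnit_iff_isUnit_det] at hunitC
    have hdet : IsUnit (P * K).det := by
      have hd : ((P * K).map Complex.ofRealHom).det = Complex.ofRealHom (P * K).det :=
        (RingHom.map_det Complex.ofRealHom (P * K)).symm
      have : (P * K).map Complex.ofRealHom = (P * K).map Complex.ofReal := rfl
      rw [this] at hd
      rw [hd] at hdetC
      simpa [isUnit_iff_ne_zero, Complex.ofReal_eq_zero] using hdetC
    have hunit : IsUnit (P * K) := (Matrix.isUnit_iff_isUnit_det _).2 hdet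
    have h1 : (P * K).rank = p := by
      simpa using Matrix.rank_of_isUnit _ hunit
    have h2 : (P * K).rank ≤ P.rank := Matrix.rank_mul_le_left P K
    have h3 : P.rank ≤ p := Matrix.rank_le_card_height P |>.trans (by simp)
    omega
  · intro hrank
    -- mulVecLin P is surjective, so P has a right inverse
    have hsurj : Function.Surjective P.mulVecLin := by
      rw [← LinearMap.range_eq_top]
      apply Submodule.eq_top_of_finrank_eq
      rw [← Matrix.rank, hrank]
      simp [Module.finrank_pi]
    choose x hx using fun i => hsurj (Pi.single i 1)
    refine ⟨Matrix.of fun j i => x i j, ?_⟩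
    have hPK : P * Matrix.of (fun j i => x i j) = 1 := by
      ext a b
      have := congrFun (hx b) a
      simp only [Matrix.mulVecLin_apply, Matrix.mulVec, dotProduct] at this
      simp only [Matrix.mul_apply, Matrix.of_apply, Matrix.one_apply]
      rw [this]
      by_cases h : a = b <;> simp [Pi.single_apply, h, eq_comm]
    rw [hPK, sub_self]
    have hz : spectralRadius ℂ (0 : Matrix (Fin p) (Fin p) ℂ) = 0 := by
      rw [spectralRadius]
      refine le_antisymm (iSup₂_le fun k hk => ?_) zero_le
      rw [spectrum.mem_iff, sub_zero] at hk
      have hk0 : k = 0 := by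
        by_contra h
        exact hk ((isUnit_iff_ne_zero.2 h).map (algebraMap ℂ (Matrix (Fin p) (Fin p) ℂ)))
      simp [hk0]
    have : specRad (0 : Matrix (Fin p) (Fin p) ℝ) = 0 := by
      rw [specRad, show (0 : Matrix (Fin p) (Fin p) ℝ).map Complex.ofReal = 0 by ext; simp, hz]
    rw [this]
    exact zero_lt_one
end

section
/- (Robust LMI criterion) Let M₀, α, β be real matrices of compatible dimensions, Σ with ΣᵀΣ ≤ I (in the Loewner order), and M = M₀ + (perturbation such that QM − QM₀ = βᵀΣα in the relevant block positions, i.e., the inequality [[−Q, (QM)ᵀ],[QM, −Q]] = [[−Q, (QM₀)ᵀ],[QM₀, −Q]] + βᵀΣα + αᵀΣᵀβ holds). If there exist Q ≻ 0 and τ > 0 with [[−Q, (QM₀)ᵀ],[QM₀, −Q]] + τ αᵀα + τ^{-1} βᵀβ ≺ 0, then [[−Q, (QM)ᵀ],[QM, −Q]] ≺ 0 and hence MᵀQM − Q ≺ 0 and ρ(M) < 1. -/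
open Matrix

section Helpers

open Complex ComplexOrder

set_option linter.unusedSectionVars false

variable {m : Type*} [Fintype m] [DecidableEq m]

private lemma dotMapAux (x y : m → ℝ) :
    (fun i => ((x i : ℂ))) ⬝ᵥ (fun i => ((y i : ℂ))) = ((x ⬝ᵥ y : ℝ) : ℂ) := by
  simp [dotProduct]

private lemma mulVecMapAux (P : Matrix m m ℝ) (x : m → ℝ) :
    (P.map Complex.ofReal) *ᵥ (fun i => ((x i : ℂ))) = fun i => (((P *ᵥ x) i : ℝ) : ℂ) := by
  funext i
  simp [mulVec, dotProduct, Matrix.map_apply]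

private lemma mapHermAux {P : Matrix m m ℝ} (hP : P.IsHermitian) :
    (P.map Complex.ofReal).IsHermitian := by
  ext i j
  have : P j i = P i j := by
    conv_lhs => rw [← hP]
    simp [conjTranspose_apply]
  simp [conjTranspose_apply, Matrix.map_apply, this]

private lemma posDefMapAux {P : Matrix m m ℝ} (hP : P.PosDef) :
    (P.map Complex.ofReal).PosDef := by
  refine posDef_iff_dotProduct_mulVec.mpr ⟨mapHermAux hP.1, fun v hv => ?_⟩
  set a : m → ℝ := fun i => (v i).re with ha
  set b : m → ℝ := fun i => (v i).im with hb
  set a' : m → ℂ := fun i => ((a i : ℂ)) with ha'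
  set b' : m → ℂ := fun i => ((b i : ℂ)) with hb'
  have hv' : v = a' + Complex.I • b' := by
    funext i
    simp [ha', hb', ha, hb, Complex.ext_iff]
  have hstar : star v = a' - Complex.I • b' := by
    funext i
    simp [ha', hb', ha, hb, Complex.ext_iff]
  set Pc := P.map Complex.ofReal with hPc
  have hPt : Pcᵀ = Pc := by
    rw [hPc, ← Matrix.transpose_map]
    have := hP.1
    rw [Matrix.IsHermitian] at this
    simpa using congrArg (Matrix.map · Complex.ofReal) this
  have symm : b' ⬝ᵥ (Pc *ᵥ a') = a' ⬝ᵥ (Pc *ᵥ b') := by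
    rw [dotProduct_mulVec, ← hPt, vecMul_transpose, dotProduct_comm, hPt]
  have expand : star v ⬝ᵥ (Pc *ᵥ v) =
      a' ⬝ᵥ (Pc *ᵥ a') + b' ⬝ᵥ (Pc *ᵥ b') := by
    rw [hstar]
    conv_lhs => rw [hv']
    rw [mulVec_add, mulVec_smul]
    rw [sub_dotProduct, dotProduct_add, dotProduct_add, smul_dotProduct,
      smul_dotProduct, dotProduct_smul, dotProduct_smul]
    rw [symm]
    simp only [smul_smul, smul_eq_mul]
    ring_nf
    rw [Complex.I_sq]
    ring
  rw [expand, mulVecMapAux, mulVecMapAux, dotMapAux, dotMapAux, ← Complex.ofReal_add]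
  rw [Complex.zero_lt_real]
  have hab : a ≠ 0 ∨ b ≠ 0 := by
    by_contra h
    push_neg at h
    apply hv
    funext i
    have h1 := congrFun h.1 i
    have h2 := congrFun h.2 i
    simp [ha, hb] at h1 h2
    exact Complex.ext h1 h2
  rcases hab with h | h
  · have h1 := hP.dotProduct_mulVec_pos h
    have h2 := hP.posSemidef.dotProduct_mulVec_nonneg b
    simp only [star_trivial] at h1 h2
    linarith
  · have h1 := hP.posSemidef.dotProduct_mulVec_nonneg a
    have h2 := hP.dotProduct_mulVec_pos h
    simp only [star_trivial] at h1 h2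
    linarith

private lemma existsEigenAux {A : Matrix m m ℂ} {μ : ℂ} (h : μ ∈ spectrum ℂ A) :
    ∃ v, v ≠ 0 ∧ A *ᵥ v = μ • v := by
  rw [spectrum.mem_iff, Matrix.isUnit_iff_isUnit_det, isUnit_iff_ne_zero, not_not] at h
  obtain ⟨v, hv, hAv⟩ := (Matrix.exists_mulVec_eq_zero_iff).mpr h
  refine ⟨v, hv, ?_⟩
  rw [sub_mulVec] at hAv
  have h2 : (algebraMap ℂ (Matrix m m ℂ)) μ *ᵥ v = μ • v := by
    funext i
    simp [Matrix.algebraMap_eq_diagonal, mulVec_diagonal]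
  rw [h2] at hAv
  exact (sub_eq_zero.mp hAv).symm

private lemma specRadLtOneAux (A : Matrix m m ℂ) (h : ∀ μ ∈ spectrum ℂ A, ‖μ‖₊ < 1) :
    spectralRadius ℂ A < 1 := by
  have hfin : (spectrum ℂ A).Finite := Matrix.finite_spectrum A
  set t : NNReal := hfin.toFinset.sup (fun μ => ‖μ‖₊) with ht
  have htlt : t < 1 := by
    rw [ht, Finset.sup_lt_iff (by norm_num : (⊥ : NNReal) < 1)]
    intro μ hμ
    exact h μ (hfin.mem_toFinset.mp hμ)
  have hle : spectralRadius ℂ A ≤ (t : ENNReal) := by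
    rw [spectralRadius]
    refine iSup₂_le fun μ hμ => ?_
    exact_mod_cast Finset.le_sup (hfin.mem_toFinset.mpr hμ)
  calc spectralRadius ℂ A ≤ (t : ENNReal) := hle
    _ < 1 := by exact_mod_cast htlt

private lemma dotTAux {a b : Type*} [Fintype a] [Fintype b] {R : Type*} [CommRing R]
    (A : Matrix a b R) (x : b → R) (y : a → R) :
    x ⬝ᵥ (Aᵀ *ᵥ y) = (A *ᵥ x) ⬝ᵥ y := by
  rw [dotProduct_mulVec, vecMul_transpose]

private lemma youngAux {k q' r' : Type*} [Fintype k] [Fintype q'] [Fintype r'] [DecidableEq r']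
    (α : Matrix r' k ℝ) (β : Matrix q' k ℝ) (S : Matrix q' r' ℝ)
    (hS : (1 - Sᵀ * S).PosSemidef) {τ : ℝ} (hτ : 0 < τ) :
    (τ • (αᵀ * α) + τ⁻¹ • (βᵀ * β) - (βᵀ * S * α + αᵀ * Sᵀ * β)).PosSemidef := by
  refine PosSemidef.of_dotProduct_mulVec_nonneg ?_ ?_
  · show _ᴴ = _
    rw [conjTranspose_eq_transpose_of_trivial]
    simp only [transpose_sub, transpose_add, transpose_smul, transpose_mul,
      transpose_transpose, Matrix.mul_assoc]
    abel
  · intro x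
    simp only [star_trivial]
    set u := α *ᵥ x with hu
    set v := β *ᵥ x with hv
    set w := S *ᵥ u with hw
    have e1 : x ⬝ᵥ ((αᵀ * α) *ᵥ x) = u ⬝ᵥ u := by
      rw [← mulVec_mulVec, dotTAux]
    have e2 : x ⬝ᵥ ((βᵀ * β) *ᵥ x) = v ⬝ᵥ v := by
      rw [← mulVec_mulVec, dotTAux]
    have e3 : x ⬝ᵥ ((βᵀ * S * α) *ᵥ x) = v ⬝ᵥ w := by
      rw [Matrix.mul_assoc, ← mulVec_mulVec, dotTAux, ← mulVec_mulVec]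
    have e4 : x ⬝ᵥ ((αᵀ * Sᵀ * β) *ᵥ x) = v ⬝ᵥ w := by
      rw [Matrix.mul_assoc, ← mulVec_mulVec, dotTAux, ← mulVec_mulVec, dotTAux,
        dotProduct_comm]
    have hcw : w ⬝ᵥ w ≤ u ⬝ᵥ u := by
      have := hS.dotProduct_mulVec_nonneg u
      simp only [star_trivial, sub_mulVec, one_mulVec, dotProduct_sub] at this
      have e5 : u ⬝ᵥ ((Sᵀ * S) *ᵥ u) = w ⬝ᵥ w := by
        rw [← mulVec_mulVec, dotTAux]
      linarith
    have hsq : 0 ≤ (τ • w - v) ⬝ᵥ (τ • w - v) := by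
      simpa using dotProduct_star_self_nonneg (τ • w - v)
    have expand : (τ • w - v) ⬝ᵥ (τ • w - v) =
        τ^2 * (w ⬝ᵥ w) - 2 * τ * (v ⬝ᵥ w) + v ⬝ᵥ v := by
      simp only [sub_dotProduct, dotProduct_sub, smul_dotProduct, dotProduct_smul,
        smul_eq_mul]
      rw [dotProduct_comm v w]
      ring
    simp only [sub_mulVec, add_mulVec, smul_mulVec, dotProduct_sub, dotProduct_add,
      dotProduct_smul]
    rw [e1, e2, e3, e4]
    simp only [smul_eq_mul]
    have h1 : τ * τ⁻¹ = 1 := mul_inv_cancel₀ hτ.ne'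
    have h2 : 0 ≤ τ^2 * (w ⬝ᵥ w) - 2 * τ * (v ⬝ᵥ w) + v ⬝ᵥ v := expand ▸ hsq
    have h3 : 0 ≤ τ⁻¹ * (τ^2 * (w ⬝ᵥ w) - 2 * τ * (v ⬝ᵥ w) + v ⬝ᵥ v) :=
      mul_nonneg (inv_pos.mpr hτ).le h2
    have h4 : 0 ≤ τ * (u ⬝ᵥ u - w ⬝ᵥ w) := mul_nonneg hτ.le (sub_nonneg.mpr hcw)
    have h5 : τ⁻¹ * (τ^2 * (w ⬝ᵥ w)) = τ * (w ⬝ᵥ w) := by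
      field_simp
    have h6 : τ⁻¹ * (2 * τ * (v ⬝ᵥ w)) = 2 * (v ⬝ᵥ w) := by
      field_simp
    nlinarith [h3, h4, h5, h6]

end Helpers

/-- Robust LMI criterion: if `[[−Q,(QM)ᵀ],[QM,−Q]] = [[−Q,(QM₀)ᵀ],[QM₀,−Q]] + βᵀΣα + αᵀΣᵀβ`
with `ΣᵀΣ ⪯ I`, and there are `Q ≻ 0`, `τ > 0` with
`[[−Q,(QM₀)ᵀ],[QM₀,−Q]] + ταᵀα + τ⁻¹βᵀβ ≺ 0`, then `[[−Q,(QM)ᵀ],[QM,−Q]] ≺ 0`,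
`MᵀQM − Q ≺ 0` and `ρ(M) < 1`. -/
theorem stmt13 (n q r : ℕ)
    (Q M M₀ : Matrix (Fin n) (Fin n) ℝ)
    (α : Matrix (Fin r) (Fin n ⊕ Fin n) ℝ)
    (β : Matrix (Fin q) (Fin n ⊕ Fin n) ℝ)
    (S : Matrix (Fin q) (Fin r) ℝ)
    (hS : (1 - Sᵀ * S).PosSemidef)
    (hQ : Q.PosDef)
    (τ : ℝ) (hτ : 0 < τ)
    (hEq : fromBlocks (-Q) (Q * M)ᵀ (Q * M) (-Q) =
      fromBlocks (-Q) (Q * M₀)ᵀ (Q * M₀) (-Q) + βᵀ * S * α + αᵀ * Sᵀ * β)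
    (hLMI : (-(fromBlocks (-Q) (Q * M₀)ᵀ (Q * M₀) (-Q)
        + τ • (αᵀ * α) + τ⁻¹ • (βᵀ * β))).PosDef) :
    (-(fromBlocks (-Q) (Q * M)ᵀ (Q * M) (-Q))).PosDef ∧
      (-(Mᵀ * Q * M - Q)).PosDef ∧ specRad M < 1 := by
  have hT := youngAux α β S hS hτ
  have h1 : (-(fromBlocks (-Q) (Q * M)ᵀ (Q * M) (-Q))).PosDef := by
    have heq2 : -(fromBlocks (-Q) (Q * M)ᵀ (Q * M) (-Q)) =
        -(fromBlocks (-Q) (Q * M₀)ᵀ (Q * M₀) (-Q)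
          + τ • (αᵀ * α) + τ⁻¹ • (βᵀ * β))
        + (τ • (αᵀ * α) + τ⁻¹ • (βᵀ * β) - (βᵀ * S * α + αᵀ * Sᵀ * β)) := by
      rw [hEq]
      abel
    rw [heq2]
    exact hLMI.add_posSemidef hT
  have h2 : (-(Mᵀ * Q * M - Q)).PosDef := by
    refine PosDef.of_dotProduct_mulVec_pos ?_ ?_
    · have hherm : (Mᵀ * Q * M).IsHermitian := by
        have := Matrix.isHermitian_conjTranspose_mul_mul M hQ.1
        exact this
      exact (hherm.sub hQ.1).neg
    · intro x hx
      have hy : Sum.elim x (M *ᵥ x) ≠ 0 := by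
        intro h
        apply hx
        funext i
        exact congrFun h (Sum.inl i)
      have hpos := h1.dotProduct_mulVec_pos hy
      simp only [star_trivial] at hpos ⊢
      have key : Sum.elim x (M *ᵥ x) ⬝ᵥ
          ((-(fromBlocks (-Q) (Q * M)ᵀ (Q * M) (-Q))) *ᵥ Sum.elim x (M *ᵥ x)) =
          x ⬝ᵥ ((-(Mᵀ * Q * M - Q)) *ᵥ x) := by
        rw [neg_mulVec, neg_mulVec, dotProduct_neg, dotProduct_neg, fromBlocks_mulVec,
          sumElim_dotProduct_sumElim]
        congr 1
        simp only [dotProduct_add, neg_mulVec, dotProduct_neg, sub_mulVec, dotProduct_sub,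
          Sum.elim_comp_inl, Sum.elim_comp_inr]
        have tA : x ⬝ᵥ ((Q * M)ᵀ *ᵥ (M *ᵥ x)) = ((Q * M) *ᵥ x) ⬝ᵥ (M *ᵥ x) := dotTAux _ _ _
        have tC : x ⬝ᵥ ((Mᵀ * Q * M) *ᵥ x) = (M *ᵥ x) ⬝ᵥ ((Q * M) *ᵥ x) := by
          rw [Matrix.mul_assoc, ← mulVec_mulVec, dotTAux]
        have tD : (M *ᵥ x) ⬝ᵥ ((Q * M) *ᵥ x) = (M *ᵥ x) ⬝ᵥ (Q *ᵥ (M *ᵥ x)) := by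
          rw [← mulVec_mulVec]
        have tB : ((Q * M) *ᵥ x) ⬝ᵥ (M *ᵥ x) = (M *ᵥ x) ⬝ᵥ ((Q * M) *ᵥ x) :=
          dotProduct_comm _ _
        rw [tA, tB, tC, tD]
        ring
      rw [← key]
      exact hpos
  refine ⟨h1, h2, ?_⟩
  rw [specRad]
  apply specRadLtOneAux
  intro μ hμ
  obtain ⟨v, hv, heig⟩ := existsEigenAux hμ
  have hPr : (Q - Mᵀ * Q * M).PosDef := by
    have := h2
    rwa [neg_sub] at this
  have hQc := posDefMapAux hQ
  have hPc := posDefMapAux hPr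
  set A := M.map Complex.ofReal with hA
  set Qc := Q.map Complex.ofReal with hQcdef
  have hmapmul : ∀ (X Y : Matrix (Fin n) (Fin n) ℝ),
      (X * Y).map Complex.ofReal = X.map Complex.ofReal * Y.map Complex.ofReal := by
    intro X Y
    ext i j
    simp [Matrix.mul_apply, Matrix.map_apply]
  have hmapT : (Mᵀ).map Complex.ofReal = Aᵀ := by
    rw [hA, Matrix.transpose_map]
  have hMap : (Mᵀ * Q * M).map Complex.ofReal = Aᵀ * Qc * A := by
    rw [hmapmul, hmapmul, hmapT]
  have hstarA : A *ᵥ star v = star (A *ᵥ v) := by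
    funext i
    simp [hA, mulVec, dotProduct, Matrix.map_apply, map_sum, Complex.conj_ofReal]
  set g := star v ⬝ᵥ (Qc *ᵥ v) with hg
  have hcomp : star v ⬝ᵥ (((Q - Mᵀ * Q * M).map Complex.ofReal) *ᵥ v) =
      g - (starRingEnd ℂ) μ * μ * g := by
    have hmapsub : (Q - Mᵀ * Q * M).map Complex.ofReal = Qc - Aᵀ * Qc * A := by
      rw [← hMap]
      ext i j
      simp [hQcdef, Matrix.map_apply, Matrix.sub_apply]
    rw [hmapsub, sub_mulVec, dotProduct_sub]
    congr 1
    rw [Matrix.mul_assoc, ← mulVec_mulVec, dotTAux, hstarA, ← mulVec_mulVec, heig]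
    rw [star_smul, smul_dotProduct, mulVec_smul, dotProduct_smul]
    simp only [smul_eq_mul, Complex.star_def]
    ring
  have hgpos := (open ComplexOrder in hQc.dotProduct_mulVec_pos hv)
  have hppos := (open ComplexOrder in hPc.dotProduct_mulVec_pos hv)
  rw [hcomp] at hppos
  rw [← hg] at hgpos
  have hmc : (starRingEnd ℂ) μ * μ = (Complex.normSq μ : ℂ) := by
    rw [mul_comm, Complex.mul_conj]
  rw [hmc] at hppos
  open ComplexOrder in
  have hgre : 0 < g.re ∧ g.im = 0 := by
    rw [Complex.lt_def] at hgpos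
    simp only [Complex.zero_re, Complex.zero_im] at hgpos
    exact ⟨hgpos.1, hgpos.2.symm⟩
  have hpre : 0 < (g - (Complex.normSq μ : ℂ) * g).re := by
    rw [Complex.lt_def] at hppos
    have := hppos.1
    rwa [Complex.zero_re] at this
  have hre : (g - (Complex.normSq μ : ℂ) * g).re = (1 - Complex.normSq μ) * g.re := by
    simp [Complex.sub_re, Complex.mul_re, hgre.2]
    ring
  rw [hre] at hpre
  have hlt : Complex.normSq μ < 1 := by
    nlinarith [hgre.1]
  have habs : ‖μ‖ < 1 := by
    have h1 : ‖μ‖ ^ 2 = Complex.normSq μ := by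
      rw [Complex.sq_norm]
    nlinarith [norm_nonneg μ]
  rw [← NNReal.coe_lt_coe]
  simpa using habs
end

section
/- (Zero-plant obstruction) Let P̃₀ ∈ ℝ^{p×p} be invertible, K ∈ ℝ^{p×p} with P̃₀K invertible, L̄ ∈ ℝ^{2p×p}, H̄ ∈ ℝ^{p×p}, F = [0, I] ∈ ℝ^{p×2p}, Ā = [[I,I],[0,I]], C̄ = [I,0]. Then the matrix [[I, H̄F],[L̄P̃₀K, Ā − L̄C̄]] is similar to [[I, P̃₀KH̄F],[0, Ā − L̄C̄ − C̄ᵀP̃₀KH̄F]] via the invertible transformation [[P̃₀K, 0],[−C̄ᵀP̃₀K, I]], and in particular it has 1 as an eigenvalue, so its spectral radius is at least 1. -/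
open Matrix

/-- Zero-plant obstruction: `[[I, H̄F],[L̄P̃₀K, Ā − L̄C̄]]` is similar via
`T = [[P̃₀K, 0],[−C̄ᵀP̃₀K, I]]` to `[[I, P̃₀KH̄F],[0, Ā − L̄C̄ − C̄ᵀP̃₀KH̄F]]`; in
particular `1` is an eigenvalue, so the spectral radius is at least `1`. -/
theorem stmt19 (p : ℕ) (hp : 0 < p)
    (P0 K Hb : Matrix (Fin p) (Fin p) ℝ)
    (Lb : Matrix (Fin p ⊕ Fin p) (Fin p) ℝ)
    (hP0 : IsUnit P0) (hPK : IsUnit (P0 * K)) :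
    letI Ab : Matrix (Fin p ⊕ Fin p) (Fin p ⊕ Fin p) ℝ := fromBlocks 1 1 0 1
    letI Cb : Matrix (Fin p) (Fin p ⊕ Fin p) ℝ := fromCols 1 0
    letI F : Matrix (Fin p) (Fin p ⊕ Fin p) ℝ := fromCols 0 1
    letI M : Matrix (Fin p ⊕ (Fin p ⊕ Fin p)) (Fin p ⊕ (Fin p ⊕ Fin p)) ℝ :=
      fromBlocks 1 (Hb * F) (Lb * (P0 * K)) (Ab - Lb * Cb)
    letI T : Matrix (Fin p ⊕ (Fin p ⊕ Fin p)) (Fin p ⊕ (Fin p ⊕ Fin p)) ℝ :=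
      fromBlocks (P0 * K) 0 (-(Cbᵀ * (P0 * K))) 1
    T * M * T⁻¹ =
        fromBlocks 1 (P0 * K * Hb * F) 0 (Ab - Lb * Cb - Cbᵀ * (P0 * K) * Hb * F) ∧
      (1 : ℂ) ∈ spectrum ℂ (M.map Complex.ofReal) ∧
      1 ≤ specRad M := by
  set Ab : Matrix (Fin p ⊕ Fin p) (Fin p ⊕ Fin p) ℝ := fromBlocks 1 1 0 1 with hAb
  set Cb : Matrix (Fin p) (Fin p ⊕ Fin p) ℝ := fromCols 1 0 with hCb
  set F : Matrix (Fin p) (Fin p ⊕ Fin p) ℝ := fromCols 0 1 with hF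
  set A := P0 * K with hA
  set M : Matrix (Fin p ⊕ (Fin p ⊕ Fin p)) (Fin p ⊕ (Fin p ⊕ Fin p)) ℝ :=
    fromBlocks 1 (Hb * F) (Lb * A) (Ab - Lb * Cb) with hM
  set T : Matrix (Fin p ⊕ (Fin p ⊕ Fin p)) (Fin p ⊕ (Fin p ⊕ Fin p)) ℝ :=
    fromBlocks A 0 (-(Cbᵀ * A)) 1 with hT
  set N : Matrix (Fin p ⊕ (Fin p ⊕ Fin p)) (Fin p ⊕ (Fin p ⊕ Fin p)) ℝ :=
    fromBlocks 1 (A * Hb * F) 0 (Ab - Lb * Cb - Cbᵀ * A * Hb * F) with hN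
  have hFC : F * Cbᵀ = 0 := by
    simp [hF, hCb, transpose_fromCols, fromCols_mul_fromRows]
  have hCC : Cb * Cbᵀ = 1 := by
    simp [hCb, transpose_fromCols, fromCols_mul_fromRows]
  have hAC : Ab * Cbᵀ = Cbᵀ := by
    simp [hAb, hCb, transpose_fromCols, fromBlocks_mul_fromRows]
  have hFC' : ∀ X : Matrix (Fin p) (Fin p) ℝ, F * (Cbᵀ * X) = 0 := fun X => by
    rw [← Matrix.mul_assoc, hFC, Matrix.zero_mul]
  have hCC' : ∀ X : Matrix (Fin p) (Fin p) ℝ, Cb * (Cbᵀ * X) = X := fun X => by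
    rw [← Matrix.mul_assoc, hCC, Matrix.one_mul]
  have hAC' : ∀ X : Matrix (Fin p) (Fin p) ℝ, Ab * (Cbᵀ * X) = Cbᵀ * X := fun X => by
    rw [← Matrix.mul_assoc, hAC]
  have hTM : T * M = N * T := by
    rw [hN, hT, hM]
    rw [fromBlocks_multiply, fromBlocks_multiply]
    refine Matrix.fromBlocks_inj.mpr ⟨?_, ?_, ?_, ?_⟩
    · simp [Matrix.mul_assoc, hFC', hA]
    · simp [Matrix.mul_assoc]
    · simp [Matrix.sub_mul, Matrix.mul_assoc, hAC', hCC', hFC']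
      abel
    · simp [Matrix.sub_mul, Matrix.mul_assoc]
      abel
  have hdetT : IsUnit T.det := by
    have : T.det = A.det := by
      show (fromBlocks A 0 (-(Cbᵀ * A)) 1).det = _
      rw [Matrix.det_fromBlocks_zero₁₂]
      simp
    rw [this]
    exact (Matrix.isUnit_iff_isUnit_det A).mp hPK
  have h1 : T * M * T⁻¹ = N := by
    rw [hTM, Matrix.mul_assoc, Matrix.mul_nonsing_inv _ hdetT, Matrix.mul_one]
  have hdetM : (1 - M).det = 0 := by
    have key : T * (1 - M) = (1 - N) * T := by
      rw [Matrix.mul_sub, Matrix.sub_mul, Matrix.mul_one, Matrix.one_mul, hTM]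
    have hd : ((1 : Matrix _ _ ℝ) - N).det = 0 := by
      have : (1 : Matrix (Fin p ⊕ (Fin p ⊕ Fin p)) (Fin p ⊕ (Fin p ⊕ Fin p)) ℝ) - N =
          fromBlocks 0 (-(A * Hb * F)) 0 (1 - (Ab - Lb * Cb - Cbᵀ * A * Hb * F)) := by
        rw [hN, ← Matrix.fromBlocks_one, sub_eq_add_neg, Matrix.fromBlocks_neg,
          Matrix.fromBlocks_add]
        simp [sub_eq_add_neg]
      rw [this, Matrix.det_fromBlocks_zero₂₁, (haveI : Nonempty (Fin p) := ⟨⟨0, hp⟩⟩; Matrix.det_zero), zero_mul]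
    have := congrArg Matrix.det key
    rw [Matrix.det_mul, Matrix.det_mul, hd, zero_mul] at this
    exact (mul_eq_zero.mp this).resolve_left hdetT.ne_zero
  have hspec : (1 : ℂ) ∈ spectrum ℂ (M.map Complex.ofReal) := by
    rw [spectrum.mem_iff]
    intro h
    rw [Matrix.isUnit_iff_isUnit_det] at h
    have hd : (algebraMap ℂ (Matrix _ _ ℂ) 1 - M.map Complex.ofReal).det = 0 := by
      rw [_root_.map_one]
      have : (1 : Matrix (Fin p ⊕ (Fin p ⊕ Fin p)) (Fin p ⊕ (Fin p ⊕ Fin p)) ℂ) -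
          M.map Complex.ofReal = ((1 : Matrix _ _ ℝ) - M).map Complex.ofReal := by
        ext i j
        by_cases hij : i = j <;> simp [Matrix.map_apply, Matrix.one_apply, hij]
      rw [this]
      have h2 := (RingHom.map_det Complex.ofRealHom (1 - M)).symm
      rw [RingHom.mapMatrix_apply] at h2
      rw [show ((1 - M).map Complex.ofReal).det =
        ((1 - M).map ⇑Complex.ofRealHom).det from rfl, h2, hdetM]
      simp
    rw [hd] at h
    exact h.ne_zero rfl
  refine ⟨h1, hspec, ?_⟩
  have : (1 : ENNReal) = ‖(1 : ℂ)‖₊ := by simp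
  rw [specRad, spectralRadius, this]
  exact le_iSup₂ (f := fun k (_ : k ∈ spectrum ℂ (M.map Complex.ofReal)) => (‖k‖₊ : ENNReal)) 1 hspec
end
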